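/- Let q ≥ 1 be an integer, λ ≥ 1/2 with 2λq an integer, and x, x' elements of the quantized set {0, 1/q, ..., 1}. Let s be uniformly distributed on the set {1/(2q), 3/(2q), ..., (4λq-1)/(2q)} (i.e., s = k/q + 1/(2q) for k = 0,...,2λq-1). Define t(x,s) = (min(s,1) + 1_{x > s})/2. Then P(t(x,s) ≠ t(x',s)) = |x - x'|/(2λ). -/

import Mathlib

open MeasureTheory Set

/-- Discrete uniform probability measure on `{k/q + 1/(2q) : 0 ≤ k ≤ m-1}`. -/
noncomputable def discUnif (q m : ℕ) : Measure ℝ :=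
  (m : ENNReal)⁻¹ • ∑ k ∈ Finset.range m, Measure.dirac ((k : ℝ) / q + 1 / (2 * q))

/-- The splitting map `t(x,s) = (min(s,1) + 1_{x > s})/2`. -/
noncomputable def splitVal (x s : ℝ) : ℝ := (min s 1 + (if s < x then (1:ℝ) else 0)) / 2

lemma halfstep_lt (q k j : ℕ) (hq : 0 < q) :
    ((k:ℝ)/q + 1/(2*q) < (j:ℝ)/q) ↔ k < j := by
  have hq' : (0:ℝ) < q := by exact_mod_cast hq
  rw [show ((k:ℝ)/q + 1/(2*q)) = (2*k+1)/(2*q) by field_simp,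
    div_lt_div_iff₀ (by positivity) hq']
  constructor
  · intro h
    have : (k:ℝ) < j := by nlinarith
    exact_mod_cast this
  · intro h
    have : (k:ℝ) + 1 ≤ j := by exact_mod_cast h
    nlinarith

lemma splitVal_ne_iff (x x' s : ℝ) :
    splitVal x s ≠ splitVal x' s ↔ ¬ (s < x ↔ s < x') := by
  unfold splitVal
  by_cases h1 : s < x <;> by_cases h2 : s < x' <;> simp [h1, h2] <;> intro hc <;> linarith

lemma key (q : ℕ) (hq : 1 ≤ q) (lam : ℝ) (hlam : 1/2 ≤ lam)
    (m : ℕ) (hm : (m : ℝ) = 2 * lam * q) (j j' : ℕ) (hj' : j' ≤ q) (hle : j ≤ j') :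
    discUnif q m {s : ℝ | splitVal ((j:ℝ)/q) s ≠ splitVal ((j':ℝ)/q) s} =
      ENNReal.ofReal (|(j:ℝ)/q - (j':ℝ)/q| / (2 * lam)) := by
  have hq' : (0:ℝ) < q := by exact_mod_cast hq
  have hjj : (j:ℝ) ≤ j' := by exact_mod_cast hle
  have hxle : (j:ℝ)/q ≤ (j':ℝ)/q := by gcongr
  have hm0 : (0:ℝ) < m := by rw [hm]; positivity
  have hqm : q ≤ m := by
    have : (q:ℝ) ≤ m := by rw [hm]; nlinarith
    exact_mod_cast this
  -- the disagreement set is the interval [j/q, j'/q)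
  have hset : {s : ℝ | splitVal ((j:ℝ)/q) s ≠ splitVal ((j':ℝ)/q) s}
      = Ico ((j:ℝ)/q) ((j':ℝ)/q) := by
    ext s
    rw [mem_setOf_eq, splitVal_ne_iff, mem_Ico]
    constructor
    · intro h
      rcases lt_or_ge s ((j:ℝ)/q) with h1 | h1
      · exact absurd ⟨fun _ => h1.trans_le hxle, fun _ => h1⟩ h
      · refine ⟨h1, ?_⟩
        by_contra h2
        exact h ⟨fun hh => absurd hh (not_lt.2 h1), fun hh => absurd hh h2⟩
    · rintro ⟨h1, h2⟩ hiff
      exact absurd (hiff.mpr h2) (not_lt.2 h1)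
  rw [hset, discUnif, Measure.smul_apply, Measure.finset_sum_apply]
  have hpt : ∀ k ∈ Finset.range m,
      Measure.dirac ((k:ℝ)/q + 1/(2*q)) (Ico ((j:ℝ)/q) ((j':ℝ)/q))
        = if k ∈ Finset.Ico j j' then (1 : ENNReal) else 0 := by
    intro k _
    rw [Measure.dirac_apply' _ measurableSet_Ico]
    by_cases hk : k ∈ Finset.Ico j j'
    · rw [Finset.mem_Ico] at hk
      have hmem : (k:ℝ)/q + 1/(2*q) ∈ Ico ((j:ℝ)/q) ((j':ℝ)/q) :=
        ⟨not_lt.1 (by rw [halfstep_lt q k j hq]; omega), (halfstep_lt q k j' hq).2 hk.2⟩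
      rw [if_pos (Finset.mem_Ico.2 hk), indicator_of_mem hmem]; rfl
    · rw [indicator_of_notMem, if_neg hk]
      rw [Finset.mem_Ico] at hk
      rw [mem_Ico, not_and_or, not_le, halfstep_lt q k j' hq]
      rcases Nat.lt_or_ge k j with h | h
      · exact Or.inl ((halfstep_lt q k j hq).2 h)
      · exact Or.inr (by omega)
  rw [Finset.sum_congr rfl hpt, Finset.sum_ite_mem,
    Finset.inter_eq_right.2 (by intro k hk; rw [Finset.mem_Ico] at hk; rw [Finset.mem_range]; omega),
    Finset.sum_const, Nat.card_Ico, nsmul_eq_mul, mul_one]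
  have habs : |(j:ℝ)/q - (j':ℝ)/q| / (2 * lam) = ((j' - j : ℕ) : ℝ) / m := by
    rw [abs_sub_comm, abs_of_nonneg (by linarith), hm, Nat.cast_sub hle,
      div_sub_div_same, div_div, mul_comm ((q:ℝ)) (2 * lam)]
  rw [habs, ENNReal.ofReal_div_of_pos hm0, ENNReal.ofReal_natCast, ENNReal.ofReal_natCast,
    ENNReal.div_eq_inv_mul, smul_eq_mul]

/-- Quantized case: with `s` uniform on the half-steps `{k/q + 1/(2q) : k < 2λq}` and
`x, x'` multiples of `1/q` in `[0,1]`, the probability that the splitting representations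
differ is exactly `|x - x'| / (2λ)`. -/
theorem quantized_splitting_disagreement_probability
    (q : ℕ) (hq : 1 ≤ q) (lam : ℝ) (hlam : 1/2 ≤ lam)
    (m : ℕ) (hm : (m : ℝ) = 2 * lam * q)
    (x x' : ℝ) (hx : ∃ k : ℕ, k ≤ q ∧ x = (k : ℝ) / q)
    (hx' : ∃ k : ℕ, k ≤ q ∧ x' = (k : ℝ) / q) :
    discUnif q m {s : ℝ | splitVal x s ≠ splitVal x' s} =
      ENNReal.ofReal (|x - x'| / (2 * lam)) := by
  obtain ⟨j, hj, rfl⟩ := hx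
  obtain ⟨j', hj', rfl⟩ := hx'
  rcases le_total j j' with hle | hle
  · exact key q hq lam hlam m hm j j' hj' hle
  · rw [show {s : ℝ | splitVal ((j:ℝ)/q) s ≠ splitVal ((j':ℝ)/q) s}
        = {s : ℝ | splitVal ((j':ℝ)/q) s ≠ splitVal ((j:ℝ)/q) s} by ext s; exact ne_comm,
      abs_sub_comm]
    exact key q hq lam hlam m hm j' j hj hle
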